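/- There exist positive constants β and σ_0 such that for every σ ∈ (0, σ_0] and every z ∈ ℝ, -U_0'(z) - σ f'(U_0(z)) ≥ 4σβ. -/

import Mathlib

noncomputable def f (u : ℝ) : ℝ := u * (1 - u) * (u - 1/2)

noncomputable def U0 (z : ℝ) : ℝ :=
  Real.exp (-z / Real.sqrt 2) / (1 + Real.exp (-z / Real.sqrt 2))

lemma f_deriv (u : ℝ) : deriv f u = -3*u^2 + 3*u - 1/2 := by
  have h1 : HasDerivAt (fun x : ℝ => x * (1 - x) * (x - 1/2))
      ((1*(1-u) + u*(0-1))*(u-1/2) + u*(1-u)*1) u := by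
    exact (((hasDerivAt_id u).mul ((hasDerivAt_const u 1).sub (hasDerivAt_id u))).mul
      ((hasDerivAt_id u).sub_const _))
  have h : HasDerivAt f (-3*u^2 + 3*u - 1/2) u := by
    unfold f
    convert h1 using 1
    ring
  exact h.deriv

lemma U0_deriv (z : ℝ) :
    deriv U0 z = -(Real.exp (-z / Real.sqrt 2)) / (Real.sqrt 2 * (1 + Real.exp (-z / Real.sqrt 2))^2) := by
  set E := Real.exp (-z / Real.sqrt 2) with hE
  have hEpos : 0 < E := Real.exp_pos _
  have hs2 : (0:ℝ) < Real.sqrt 2 := Real.sqrt_pos.mpr (by norm_num)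
  have hexp : HasDerivAt (fun z : ℝ => Real.exp (-z / Real.sqrt 2))
      (E * (-1 / Real.sqrt 2)) z := by
    have hin : HasDerivAt (fun z : ℝ => -z / Real.sqrt 2) (-1 / Real.sqrt 2) z :=
      ((hasDerivAt_id z).neg).div_const _
    exact hin.exp
  have hden : HasDerivAt (fun z : ℝ => 1 + Real.exp (-z / Real.sqrt 2))
      (E * (-1 / Real.sqrt 2)) z := hexp.const_add 1
  have hdne : (1 + E) ≠ 0 := by positivity
  have h : HasDerivAt U0
      ((E * (-1 / Real.sqrt 2) * (1 + E) - E * (E * (-1 / Real.sqrt 2))) / (1 + E)^2) z := by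
    exact hexp.div hden hdne
  rw [h.deriv]
  have h2 : Real.sqrt 2 ≠ 0 := ne_of_gt hs2
  have hs2sq : Real.sqrt 2 ^ 2 = 2 := Real.sq_sqrt (by norm_num)
  field_simp
  ring

theorem U0_f_inequality :
    ∃ β > (0:ℝ), ∃ σ0 > (0:ℝ), ∀ σ : ℝ, σ ∈ Set.Ioc 0 σ0 → ∀ z : ℝ,
      -deriv U0 z - σ * deriv f (U0 z) ≥ 4 * σ * β := by
  refine ⟨1/8, by norm_num, 1/5, by norm_num, ?_⟩
  rintro σ ⟨hσ0, hσ1⟩ z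
  rw [U0_deriv, f_deriv]
  set E := Real.exp (-z / Real.sqrt 2) with hE
  have hEpos : 0 < E := Real.exp_pos _
  have hs2 : (0:ℝ) < Real.sqrt 2 := Real.sqrt_pos.mpr (by norm_num)
  have hs2sq : Real.sqrt 2 ^ 2 = 2 := Real.sq_sqrt (by norm_num)
  have hs2lt : Real.sqrt 2 < 3/2 := by nlinarith
  have hU : U0 z = E / (1 + E) := rfl
  rw [hU]
  have h1E : (0:ℝ) < 1 + E := by positivity
  rw [ge_iff_le]
  have key : E / (Real.sqrt 2 * (1 + E)^2) - σ * (-3*(E/(1+E))^2 + 3*(E/(1+E)) - 1/2)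
      ≥ σ / 2 := by
    have hg : (E/(1+E))^2 = E^2/(1+E)^2 := by rw [div_pow]
    have expand : -3*(E/(1+E))^2 + 3*(E/(1+E)) - 1/2
        = 3 * (E / (1+E)^2) - 1/2 := by
      field_simp
      ring
    rw [expand]
    have hgpos : 0 < E / (1+E)^2 := by positivity
    have h1 : E / (Real.sqrt 2 * (1+E)^2) = (E/(1+E)^2) / Real.sqrt 2 := by
      rw [div_div, mul_comm]
    rw [h1]
    set g := E / (1+E)^2 with hgdef
    have h2 : g / Real.sqrt 2 ≥ 3 * σ * g := by
      have : 3 * σ ≤ 1 / Real.sqrt 2 := by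
        rw [le_div_iff₀ hs2]
        nlinarith
      calc 3 * σ * g ≤ (1 / Real.sqrt 2) * g := by nlinarith
        _ = g / Real.sqrt 2 := by ring
    nlinarith
  simp only [neg_div, neg_neg]
  linarith [key]
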